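/- arXiv:2203.09751 — 4 statements merged into one kernel-verified Lean document; each statement's English description precedes it below -/
import Mathlib

section
/- For all real a and b, the integral over ℝ of Φ(a + b·x)·φ(x) dx equals Φ(a / √(1 + b²)), where Φ is the standard normal CDF and φ the standard normal density. -/
open MeasureTheory Real

/-- Standard normal density. -/
noncomputable def stdPdf (x : ℝ) : ℝ := (Real.sqrt (2 * Real.pi))⁻¹ * Real.exp (-x ^ 2 / 2)

/-- Standard normal CDF. -/
noncomputable def stdCdf (t : ℝ) : ℝ := ∫ s in Set.Iic t, stdPdf s

/-- Owen's T function. -/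
noncomputable def owenT (h a : ℝ) : ℝ :=
  (2 * Real.pi)⁻¹ * ∫ x in (0:ℝ)..a, Real.exp (-h ^ 2 * (1 + x ^ 2) / 2) / (1 + x ^ 2)

/-- Standard bivariate normal density with correlation ρ. -/
noncomputable def bvnPdf (ρ x y : ℝ) : ℝ :=
  Real.exp (-(x ^ 2 - 2 * ρ * x * y + y ^ 2) / (2 * (1 - ρ ^ 2))) /
    (2 * Real.pi * Real.sqrt (1 - ρ ^ 2))

/-- Standard bivariate normal CDF with correlation ρ. -/
noncomputable def bvn (u v ρ : ℝ) : ℝ :=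
  ∫ p : ℝ × ℝ in Set.Iic u ×ˢ Set.Iic v, bvnPdf ρ p.1 p.2

/-- General bivariate Gaussian density with means μ₁ μ₂, std devs σ₁ σ₂, covariance σ₁₂. -/
noncomputable def biGaussPdf (μ₁ μ₂ σ₁ σ₂ σ₁₂ x y : ℝ) : ℝ :=
  Real.exp (-(σ₂ ^ 2 * (x - μ₁) ^ 2 - 2 * σ₁₂ * (x - μ₁) * (y - μ₂) + σ₁ ^ 2 * (y - μ₂) ^ 2) /
      (2 * (σ₁ ^ 2 * σ₂ ^ 2 - σ₁₂ ^ 2))) /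
    (2 * Real.pi * Real.sqrt (σ₁ ^ 2 * σ₂ ^ 2 - σ₁₂ ^ 2))

section Aux

open Set

lemma shiftIic (f : ℝ → ℝ) (a c : ℝ) :
    ∫ s in Iic (a + c), f s = ∫ t in Iic a, f (t + c) := by
  rw [← integral_indicator measurableSet_Iic, ← integral_indicator measurableSet_Iic]
  rw [← integral_add_right_eq_self (fun s => (Iic (a + c)).indicator f s) c]
  congr 1
  ext t
  by_cases h : t ≤ a
  · simp [indicator_of_mem, h, mem_Iic, add_le_add_iff_right]
  · simp [indicator_of_notMem, h, mem_Iic, add_le_add_iff_right]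

lemma scaleIic (g : ℝ → ℝ) {c : ℝ} (hc : 0 < c) (d : ℝ) :
    ∫ u in Iic d, c * g (c * u) = ∫ t in Iic (c * d), g t := by
  rw [← integral_indicator measurableSet_Iic, ← integral_indicator measurableSet_Iic]
  have h1 : ∀ u : ℝ, (Iic d).indicator (fun u => c * g (c * u)) u
      = c * (Iic (c * d)).indicator g (c * u) := by
    intro u
    by_cases h : u ≤ d
    · simp [indicator_of_mem, h, mem_Iic, mul_le_mul_iff_right₀ hc]
    · simp [indicator_of_notMem, h, mem_Iic, (mul_le_mul_iff_right₀ hc), h]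
  simp_rw [h1]
  rw [integral_const_mul, Measure.integral_comp_mul_left (fun x => (Iic (c * d)).indicator g x) c]
  rw [abs_of_pos (inv_pos.2 hc)]
  simp [smul_eq_mul, ← mul_assoc, mul_inv_cancel₀ hc.ne']

lemma stdPdf_pointwise (b t x : ℝ) :
    stdPdf (t + b * x) * stdPdf x
      = ((2 * π)⁻¹ * Real.exp (-t ^ 2 / (2 * (1 + b ^ 2))))
        * Real.exp (-((1 + b ^ 2) / 2) * (x + b * t / (1 + b ^ 2)) ^ 2) := by
  have hb : (0:ℝ) < 1 + b ^ 2 := by positivity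
  unfold stdPdf
  have h2pi : (0:ℝ) ≤ 2 * π := by positivity
  rw [show ((Real.sqrt (2 * π))⁻¹ * Real.exp (-(t + b * x) ^ 2 / 2)) *
      ((Real.sqrt (2 * π))⁻¹ * Real.exp (-x ^ 2 / 2))
      = (Real.sqrt (2 * π) * Real.sqrt (2 * π))⁻¹ *
        (Real.exp (-(t + b * x) ^ 2 / 2) * Real.exp (-x ^ 2 / 2)) by ring]
  rw [Real.mul_self_sqrt h2pi, ← Real.exp_add, mul_assoc, ← Real.exp_add]
  congr 1
  congr 1
  field_simp
  ring

lemma inner_int (b t : ℝ) :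
    ∫ x : ℝ, stdPdf (t + b * x) * stdPdf x
      = (Real.sqrt (2 * π) * Real.sqrt (1 + b ^ 2))⁻¹
        * Real.exp (-t ^ 2 / (2 * (1 + b ^ 2))) := by
  have hb : (0:ℝ) < 1 + b ^ 2 := by positivity
  simp_rw [stdPdf_pointwise b t]
  rw [integral_const_mul]
  have h1 : ∫ x : ℝ, Real.exp (-((1 + b ^ 2) / 2) * (x + b * t / (1 + b ^ 2)) ^ 2)
      = Real.sqrt (π / ((1 + b ^ 2) / 2)) := by
    rw [← integral_gaussian ((1 + b ^ 2) / 2)]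
    exact integral_add_right_eq_self (fun x => Real.exp (-((1 + b ^ 2) / 2) * x ^ 2)) _
  rw [h1]
  have h2 : Real.sqrt (π / ((1 + b ^ 2) / 2)) = Real.sqrt (2 * π) / Real.sqrt (1 + b ^ 2) := by
    rw [show π / ((1 + b ^ 2) / 2) = (2 * π) / (1 + b ^ 2) by field_simp,
      Real.sqrt_div (by positivity)]
  rw [h2]
  have hs : Real.sqrt (2 * π) ≠ 0 := by positivity
  have hs2 : Real.sqrt (1 + b ^ 2) ≠ 0 := by positivity
  rw [show (2 * π : ℝ) = Real.sqrt (2 * π) * Real.sqrt (2 * π) from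
    (Real.mul_self_sqrt (by positivity)).symm]
  field_simp
  ring
  rw [Real.sqrt_sq (Real.sqrt_nonneg _)]

lemma stdPdf_continuous : Continuous stdPdf := by
  unfold stdPdf
  fun_prop

lemma integrable2 (a b : ℝ) :
    Integrable (Function.uncurry fun x t => stdPdf (t + b * x) * stdPdf x)
      (volume.prod ((volume : Measure ℝ).restrict (Iic a))) := by
  have hmeas : AEStronglyMeasurable
      (Function.uncurry fun x t => stdPdf (t + b * x) * stdPdf x)
      (volume.prod ((volume : Measure ℝ).restrict (Iic a))) := by
    apply Continuous.aestronglyMeasurable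
    apply Continuous.mul
    · exact stdPdf_continuous.comp (by fun_prop)
    · exact stdPdf_continuous.comp continuous_fst
  have hk : (0:ℝ) < 1 + 2 * b ^ 2 := by positivity
  have hG : Integrable
      (fun z : ℝ × ℝ => ((2 * π)⁻¹ * Real.exp (-(1/4) * z.1 ^ 2))
        * Real.exp (-(2 * (1 + 2 * b ^ 2))⁻¹ * z.2 ^ 2))
      (volume.prod ((volume : Measure ℝ).restrict (Iic a))) := by
    have hGx : Integrable (fun x : ℝ => (2 * π)⁻¹ * Real.exp (-(1/4) * x ^ 2)) volume :=
      (integrable_exp_neg_mul_sq (by norm_num : (0:ℝ) < 1/4)).const_mul _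
    have hGt : Integrable (fun t : ℝ => Real.exp (-(2 * (1 + 2 * b ^ 2))⁻¹ * t ^ 2))
        ((volume : Measure ℝ).restrict (Iic a)) :=
      (integrable_exp_neg_mul_sq (by positivity : (0:ℝ) < (2 * (1 + 2 * b ^ 2))⁻¹)).restrict
    exact hGx.mul_prod hGt
  apply Integrable.mono' hG hmeas
  filter_upwards with z
  obtain ⟨x, t⟩ := z
  simp only [Function.uncurry_apply_pair]
  have h1 : stdPdf (t + b * x) * stdPdf x
      = (2 * π)⁻¹ * Real.exp (-((t + b * x) ^ 2 + x ^ 2) / 2) := by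
    unfold stdPdf
    rw [show ((Real.sqrt (2 * π))⁻¹ * Real.exp (-(t + b * x) ^ 2 / 2)) *
        ((Real.sqrt (2 * π))⁻¹ * Real.exp (-x ^ 2 / 2))
        = (Real.sqrt (2 * π) * Real.sqrt (2 * π))⁻¹ *
          (Real.exp (-(t + b * x) ^ 2 / 2) * Real.exp (-x ^ 2 / 2)) by ring]
    rw [Real.mul_self_sqrt (by positivity), ← Real.exp_add]
    congr 1
    ring
  rw [Real.norm_eq_abs, abs_of_nonneg (by unfold stdPdf; positivity), h1]
  rw [show ((2 * π)⁻¹ * Real.exp (-(1/4) * x ^ 2)) * Real.exp (-(2 * (1 + 2 * b ^ 2))⁻¹ * t ^ 2)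
      = (2 * π)⁻¹ * Real.exp (-(1/4) * x ^ 2 + -(2 * (1 + 2 * b ^ 2))⁻¹ * t ^ 2) by
    rw [Real.exp_add]; ring]
  apply mul_le_mul_of_nonneg_left _ (by positivity)
  apply Real.exp_le_exp.2
  have key : 2 * (1 + 2 * b ^ 2) * ((t + b * x) ^ 2 + x ^ 2)
      ≥ (1 + 2 * b ^ 2) * x ^ 2 + 2 * t ^ 2 := by
    nlinarith [sq_nonneg (2 * b * t + (1 + 2 * b ^ 2) * x), sq_nonneg (t + b * x), sq_nonneg x,
      sq_nonneg b, sq_nonneg (b * x)]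
  have h3 : x ^ 2 / 2 + t ^ 2 / (1 + 2 * b ^ 2) ≤ (t + b * x) ^ 2 + x ^ 2 := by
    rw [div_add_div _ _ (two_ne_zero) hk.ne', div_le_iff₀ (by positivity)]
    nlinarith [key]
  have e : -(1/4) * x ^ 2 + -(2 * (1 + 2 * b ^ 2))⁻¹ * t ^ 2
      = -(((x ^ 2 / 2 + t ^ 2 / (1 + 2 * b ^ 2))) / 2) := by
    field_simp
    ring
  rw [e]
  linarith [h3]

end Aux

theorem stmt_0 (a b : ℝ) :
    ∫ x : ℝ, stdCdf (a + b * x) * stdPdf x = stdCdf (a / Real.sqrt (1 + b ^ 2)) := by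
  have hb : (0:ℝ) < 1 + b ^ 2 := by positivity
  have hc : 0 < Real.sqrt (1 + b ^ 2) := Real.sqrt_pos.2 hb
  have hcsq : Real.sqrt (1 + b ^ 2) ^ 2 = 1 + b ^ 2 := Real.sq_sqrt hb.le
  have step1 : ∀ x : ℝ, stdCdf (a + b * x) * stdPdf x
      = ∫ t in Set.Iic a, stdPdf (t + b * x) * stdPdf x := by
    intro x
    rw [stdCdf, shiftIic stdPdf a (b * x), ← integral_mul_const]
  simp_rw [step1]
  rw [integral_integral_swap (integrable2 a b)]
  simp_rw [inner_int b]
  rw [stdCdf]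
  have had : a = Real.sqrt (1 + b ^ 2) * (a / Real.sqrt (1 + b ^ 2)) := by field_simp
  conv_lhs => rw [had]
  rw [← scaleIic (fun t => (Real.sqrt (2 * π) * Real.sqrt (1 + b ^ 2))⁻¹
      * Real.exp (-t ^ 2 / (2 * (1 + b ^ 2)))) hc (a / Real.sqrt (1 + b ^ 2))]
  refine setIntegral_congr_fun measurableSet_Iic fun u _ => ?_
  simp only [stdPdf]
  have h1 : (Real.sqrt (1 + b ^ 2) * u) ^ 2 = (1 + b ^ 2) * u ^ 2 := by
    rw [mul_pow, hcsq]
  rw [h1]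
  have h2 : -((1 + b ^ 2) * u ^ 2) / (2 * (1 + b ^ 2)) = -u ^ 2 / 2 := by
    field_simp
  rw [h2]
  have hs : Real.sqrt (2 * π) ≠ 0 := by positivity
  field_simp
end

section
/- If f ~ N(μ, σ²) with σ > 0, then Var[Φ(f)] = Φ(a) − Φ(a)² − 2T(a, c), where a = μ/√(1+σ²), c = 1/√(1+2σ²), and T is Owen's T function. -/
open MeasureTheory Real

namespace OwenAux

open Filter Set Topology
open scoped NNReal ENNReal

lemma sqrt2pi_pos : 0 < Real.sqrt (2 * π) :=
  Real.sqrt_pos.2 (by positivity)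

lemma sq_sqrt2pi : Real.sqrt (2 * π) ^ 2 = 2 * π :=
  Real.sq_sqrt (by positivity)

lemma stdPdf_nonneg (x : ℝ) : 0 ≤ stdPdf x := by
  unfold stdPdf; positivity

lemma stdPdf_le (x : ℝ) : stdPdf x ≤ (Real.sqrt (2 * π))⁻¹ := by
  unfold stdPdf
  have h1 : Real.exp (-x ^ 2 / 2) ≤ 1 := by
    rw [Real.exp_le_one_iff]; nlinarith [sq_nonneg x]
  nlinarith [sqrt2pi_pos, inv_pos.2 sqrt2pi_pos, h1, Real.exp_pos (-x ^ 2 / 2)]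

lemma continuous_stdPdf : Continuous stdPdf := by
  unfold stdPdf; fun_prop

lemma integrable_stdPdf : Integrable stdPdf := by
  have : stdPdf = fun x => (Real.sqrt (2 * π))⁻¹ * Real.exp (-(2⁻¹ : ℝ) * x ^ 2) := by
    funext x; unfold stdPdf; ring_nf
  rw [this]
  exact (integrable_exp_neg_mul_sq (by norm_num : (0:ℝ) < 2⁻¹)).const_mul _

lemma integral_stdPdf : ∫ x, stdPdf x = 1 := by
  have h : ∫ x : ℝ, Real.exp (-(2⁻¹ : ℝ) * x ^ 2) = Real.sqrt (π / 2⁻¹) :=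
    integral_gaussian (2⁻¹ : ℝ)
  have h2 : (π / (2⁻¹ : ℝ)) = 2 * π := by ring
  have h3 : ∫ x : ℝ, Real.exp (-x ^ 2 / 2) = Real.sqrt (2 * π) := by
    rw [show (fun x : ℝ => Real.exp (-x ^ 2 / 2)) = fun x : ℝ => Real.exp (-(2⁻¹ : ℝ) * x ^ 2) by
      funext x; ring_nf, h, h2]
  unfold stdPdf
  rw [MeasureTheory.integral_const_mul, h3]
  field_simp

lemma integrableOn_stdPdf (s : Set ℝ) : IntegrableOn stdPdf s :=
  integrable_stdPdf.integrableOn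

lemma stdCdf_nonneg (t : ℝ) : 0 ≤ stdCdf t :=
  setIntegral_nonneg measurableSet_Iic fun x _ => stdPdf_nonneg x

lemma stdCdf_le_one (t : ℝ) : stdCdf t ≤ 1 := by
  rw [← integral_stdPdf]
  exact setIntegral_le_integral integrable_stdPdf (Filter.Eventually.of_forall stdPdf_nonneg)

lemma abs_stdCdf_le_one (t : ℝ) : |stdCdf t| ≤ 1 :=
  abs_le.2 ⟨by linarith [stdCdf_nonneg t], stdCdf_le_one t⟩

lemma stdCdf_eq (t : ℝ) : stdCdf t = stdCdf 0 + ∫ x in (0:ℝ)..t, stdPdf x := by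
  rw [← intervalIntegral.integral_Iic_sub_Iic (integrableOn_stdPdf _) (integrableOn_stdPdf _)]
  unfold stdCdf; ring

lemma hasDerivAt_stdCdf (t : ℝ) : HasDerivAt stdCdf (stdPdf t) t := by
  have h : HasDerivAt (fun u => ∫ x in (0:ℝ)..u, stdPdf x) (stdPdf t) t :=
    intervalIntegral.integral_hasDerivAt_right (continuous_stdPdf.intervalIntegrable _ _)
      (continuous_stdPdf.stronglyMeasurableAtFilter _ _)
      continuous_stdPdf.continuousAt
  have : HasDerivAt (fun u => stdCdf 0 + ∫ x in (0:ℝ)..u, stdPdf x) (stdPdf t) t :=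
    h.const_add _
  exact this.congr_of_eventuallyEq (Filter.Eventually.of_forall fun u => stdCdf_eq u)

lemma continuous_stdCdf : Continuous stdCdf :=
  continuous_iff_continuousAt.2 fun t => (hasDerivAt_stdCdf t).continuousAt

lemma tendsto_stdCdf_atBot : Tendsto stdCdf atBot (𝓝 0) := by
  have heq : ∀ t : ℝ, stdCdf t = ∫ x, (Set.Iic t).indicator stdPdf x := by
    intro t; rw [integral_indicator measurableSet_Iic]; rfl
  refine Tendsto.congr (fun t => (heq t).symm) ?_
  have h0 : (0 : ℝ) = ∫ _ : ℝ, (0:ℝ) := by simp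
  rw [h0]
  apply tendsto_integral_filter_of_dominated_convergence stdPdf
  · exact Filter.Eventually.of_forall fun t =>
      (continuous_stdPdf.aestronglyMeasurable).indicator measurableSet_Iic
  · exact Filter.Eventually.of_forall fun t => Filter.Eventually.of_forall fun x => by
      rw [Real.norm_eq_abs, abs_of_nonneg (Set.indicator_nonneg (fun y _ => stdPdf_nonneg y) x)]
      exact Set.indicator_le_self' (fun y _ => stdPdf_nonneg y) x
  · exact integrable_stdPdf
  · refine Filter.Eventually.of_forall fun x => ?_
    refine Tendsto.congr' ?_ tendsto_const_nhds
    filter_upwards [eventually_lt_atBot x] with t ht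
    exact (Set.indicator_of_notMem (by simpa using ht.not_ge) stdPdf).symm

lemma stdCdf_zero : stdCdf 0 = 2⁻¹ := by
  have hsplit : stdCdf 0 + ∫ x in Set.Ioi (0:ℝ), stdPdf x = 1 := by
    rw [← integral_stdPdf]
    unfold stdCdf
    rw [← setIntegral_union (Set.Iic_disjoint_Ioi le_rfl) measurableSet_Ioi
      (integrableOn_stdPdf _) (integrableOn_stdPdf _), Set.Iic_union_Ioi]
    exact setIntegral_univ
  have hsym : ∫ x in Set.Ioi (0:ℝ), stdPdf x = stdCdf 0 := by
    unfold stdCdf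
    have h := integral_comp_neg_Iic (0:ℝ) stdPdf
    rw [neg_zero] at h
    rw [← h]
    refine setIntegral_congr_fun measurableSet_Iic fun x _ => ?_
    unfold stdPdf; rw [show (-x)^2 = x^2 by ring]
  rw [hsym] at hsplit; linarith

/-- Two functions with the same derivative and difference tending to 0 at -∞ are equal. -/
lemma eq_of_hasDerivAt_eq {f g d : ℝ → ℝ} (hf : ∀ x, HasDerivAt f (d x) x)
    (hg : ∀ x, HasDerivAt g (d x) x)
    (hlim : Tendsto (fun x => f x - g x) atBot (𝓝 0)) (a : ℝ) : f a = g a := by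
  have hd : ∀ x, HasDerivAt (fun y => f y - g y) 0 x := fun x => by
    simpa using (hf x).fun_sub (hg x)
  have hconst : ∀ x y, f x - g x = f y - g y :=
    is_const_of_deriv_eq_zero (fun x => (hd x).differentiableAt) fun x => (hd x).deriv
  have : (fun x => f x - g x) = fun _ => f a - g a := funext fun x => hconst x a
  rw [this] at hlim
  have := tendsto_nhds_unique hlim tendsto_const_nhds
  linarith

lemma tendsto_integral_stdPdf_mul_atBot {w : ℝ → ℝ → ℝ}
    (hmeas : ∀ a, AEStronglyMeasurable (fun x => stdPdf x * w a x) volume)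
    (hbd : ∀ a x, |w a x| ≤ 1)
    (hlim : ∀ x, Tendsto (fun a => w a x) atBot (𝓝 0)) :
    Tendsto (fun a => ∫ x, stdPdf x * w a x) atBot (𝓝 0) := by
  have h0 : (0 : ℝ) = ∫ _ : ℝ, (0:ℝ) := by simp
  rw [h0]
  apply tendsto_integral_filter_of_dominated_convergence stdPdf
  · exact Filter.Eventually.of_forall hmeas
  · refine Filter.Eventually.of_forall fun a => Filter.Eventually.of_forall fun x => ?_
    rw [Real.norm_eq_abs, abs_mul, abs_of_nonneg (stdPdf_nonneg x)]
    calc stdPdf x * |w a x| ≤ stdPdf x * 1 :=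
          mul_le_mul_of_nonneg_left (hbd a x) (stdPdf_nonneg x)
      _ = stdPdf x := mul_one _
  · exact integrable_stdPdf
  · exact Filter.Eventually.of_forall fun x => by
      simpa using (hlim x).const_mul (stdPdf x)

section Params

variable {b : ℝ} (hb : 0 < b)

/-- Key pointwise Gaussian product identity. -/
lemma stdPdf_mul (a x : ℝ) :
    stdPdf x * stdPdf (a + b * x) =
      stdPdf (a / Real.sqrt (1 + b ^ 2)) *
        stdPdf (Real.sqrt (1 + b ^ 2) * x + a * b / Real.sqrt (1 + b ^ 2)) := by
  have hs : 0 < Real.sqrt (1 + b ^ 2) := Real.sqrt_pos.2 (by positivity)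
  have hs2 : Real.sqrt (1 + b ^ 2) ^ 2 = 1 + b ^ 2 := Real.sq_sqrt (by positivity)
  set s := Real.sqrt (1 + b ^ 2) with hsdef
  have h1b : (1:ℝ) + b ^ 2 ≠ 0 := by positivity
  have e1 : s * x + a * b / s = ((1 + b ^ 2) * x + a * b) / s := by
    rw [← hs2]; field_simp
  have key : -x ^ 2 / 2 + -(a + b * x) ^ 2 / 2 = -(a / s) ^ 2 / 2 + -(s * x + a * b / s) ^ 2 / 2 := by
    rw [e1, div_pow, div_pow, hs2]
    field_simp
    ring
  have hmul : ∀ u v : ℝ, ((Real.sqrt (2 * π))⁻¹ * Real.exp u) * ((Real.sqrt (2 * π))⁻¹ * Real.exp v)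
      = (Real.sqrt (2 * π))⁻¹ * (Real.sqrt (2 * π))⁻¹ * Real.exp (u + v) := by
    intro u v; rw [Real.exp_add]; ring
  unfold stdPdf
  rw [hmul, hmul, key]

/-- Translation-scaling of the total integral of `stdPdf`. -/
lemma integral_stdPdf_affine {c : ℝ} (hc : 0 < c) (d : ℝ) :
    ∫ x, stdPdf (c * x + d) = c⁻¹ := by
  have h1 : ∫ x, (fun y => stdPdf (y + d)) (c * x) = |c⁻¹| • ∫ y, stdPdf (y + d) :=
    MeasureTheory.Measure.integral_comp_mul_left (fun y => stdPdf (y + d)) c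
  have h2 : ∫ y, stdPdf (y + d) = ∫ y, stdPdf y :=
    integral_add_right_eq_self stdPdf d
  simp only at h1
  rw [h1, h2, integral_stdPdf, smul_eq_mul, mul_one, abs_of_nonneg (inv_nonneg.2 hc.le)]

/-- Generic integral transform by affine substitution. -/
lemma integral_comp_affine (G : ℝ → ℝ) {c : ℝ} (hc : 0 < c) (d : ℝ) :
    ∫ x, G (c * x + d) = c⁻¹ * ∫ y, G y := by
  have h1 : ∫ x, (fun y => G (y + d)) (c * x) = |c⁻¹| • ∫ y, G (y + d) :=
    MeasureTheory.Measure.integral_comp_mul_left (fun y => G (y + d)) c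
  have h2 : ∫ y, G (y + d) = ∫ y, G y := integral_add_right_eq_self G d
  simp only at h1
  rw [h1, h2, smul_eq_mul, abs_of_nonneg (inv_nonneg.2 hc.le)]

include hb in
lemma integral_stdPdf_mul_stdPdf (a : ℝ) :
    ∫ x, stdPdf x * stdPdf (a + b * x) =
      stdPdf (a / Real.sqrt (1 + b ^ 2)) * (Real.sqrt (1 + b ^ 2))⁻¹ := by
  have hs : 0 < Real.sqrt (1 + b ^ 2) := Real.sqrt_pos.2 (by positivity)
  simp_rw [stdPdf_mul a]
  rw [MeasureTheory.integral_const_mul, integral_stdPdf_affine hs]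

/-- Differentiation under the integral sign for our parametric integrals. -/
lemma hasDerivAt_param {w w' : ℝ → ℝ} (hw : ∀ y, HasDerivAt w (w' y) y)
    (hwc : Continuous w) (hw'c : Continuous w') {C : ℝ}
    (hwb : ∀ y, |w y| ≤ 1) (hw'b : ∀ y, |w' y| ≤ C) (a : ℝ) :
    HasDerivAt (fun a => ∫ x, stdPdf x * w (a + b * x))
      (∫ x, stdPdf x * w' (a + b * x)) a := by
  have key := hasDerivAt_integral_of_dominated_loc_of_deriv_le
    (μ := volume)
    (F := fun a x => stdPdf x * w (a + b * x))
    (F' := fun a x => stdPdf x * w' (a + b * x))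
    (x₀ := a) (bound := fun x => C * stdPdf x)
    (Metric.ball_mem_nhds a one_pos)
    (Filter.Eventually.of_forall fun a' =>
      (continuous_stdPdf.mul (hwc.comp (by fun_prop))).aestronglyMeasurable)
    ?_ ?_ ?_ ?_ ?_
  · exact key.2
  · -- Integrable (F a)
    apply integrable_stdPdf.mono'
      (continuous_stdPdf.mul (hwc.comp (by fun_prop))).aestronglyMeasurable
    refine Filter.Eventually.of_forall fun x => ?_
    rw [Real.norm_eq_abs, Pi.mul_apply, Function.comp_apply, abs_mul, abs_of_nonneg (stdPdf_nonneg x)]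
    calc stdPdf x * |w (a + b * x)| ≤ stdPdf x * 1 :=
          mul_le_mul_of_nonneg_left (hwb _) (stdPdf_nonneg x)
      _ = stdPdf x := mul_one _
  · exact (continuous_stdPdf.mul (hw'c.comp (by fun_prop))).aestronglyMeasurable
  · refine Filter.Eventually.of_forall fun x => fun a' _ => ?_
    show ‖stdPdf x * w' (a' + b * x)‖ ≤ C * stdPdf x
    rw [Real.norm_eq_abs, abs_mul, abs_of_nonneg (stdPdf_nonneg x), mul_comm C (stdPdf x)]
    exact mul_le_mul_of_nonneg_left (hw'b _) (stdPdf_nonneg x)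
  · apply integrable_stdPdf.const_mul
  · refine Filter.Eventually.of_forall fun x => fun a' _ => ?_
    have h1 : HasDerivAt (fun a => a + b * x) 1 a' := (hasDerivAt_id a').add_const (b * x)
    have h2 : HasDerivAt (fun a => w (a + b * x)) (w' (a' + b * x) * 1) a' :=
      (hw (a' + b * x)).comp a' h1
    simpa using h2.const_mul (stdPdf x)

include hb in
/-- The first moment: `∫ φ(x) Φ(a+bx) dx = Φ(a/√(1+b²))`. -/
lemma integral_stdPdf_mul_stdCdf (a : ℝ) :
    ∫ x, stdPdf x * stdCdf (a + b * x) = stdCdf (a / Real.sqrt (1 + b ^ 2)) := by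
  have hs : 0 < Real.sqrt (1 + b ^ 2) := Real.sqrt_pos.2 (by positivity)
  refine eq_of_hasDerivAt_eq
    (f := fun a => ∫ x, stdPdf x * stdCdf (a + b * x))
    (g := fun a => stdCdf (a / Real.sqrt (1 + b ^ 2)))
    (d := fun a => stdPdf (a / Real.sqrt (1 + b ^ 2)) *
      (Real.sqrt (1 + b ^ 2))⁻¹) (fun a => ?_) (fun a => ?_) ?_ a
  · have h := hasDerivAt_param (b := b) hasDerivAt_stdCdf continuous_stdCdf continuous_stdPdf
      abs_stdCdf_le_one (fun y => (abs_of_nonneg (stdPdf_nonneg y)).le.trans (stdPdf_le y)) a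
    rwa [integral_stdPdf_mul_stdPdf hb] at h
  · have h1 : HasDerivAt (fun a : ℝ => a / Real.sqrt (1 + b ^ 2))
        (Real.sqrt (1 + b ^ 2))⁻¹ a := by
      simpa using (hasDerivAt_id a).div_const (Real.sqrt (1 + b ^ 2))
    exact (hasDerivAt_stdCdf _).comp a h1
  · have h1 : Tendsto (fun a => ∫ x, stdPdf x * stdCdf (a + b * x)) atBot (𝓝 0) := by
      apply tendsto_integral_stdPdf_mul_atBot
      · exact fun a => (continuous_stdPdf.mul (continuous_stdCdf.comp (by fun_prop))).aestronglyMeasurable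
      · exact fun a x => abs_stdCdf_le_one _
      · exact fun x => tendsto_stdCdf_atBot.comp (tendsto_atBot_add_const_right _ (b * x) tendsto_id)
    have h2 : Tendsto (fun a : ℝ => stdCdf (a / Real.sqrt (1 + b ^ 2))) atBot (𝓝 0) :=
      tendsto_stdCdf_atBot.comp (tendsto_id.atBot_div_const hs)
    simpa using h1.sub h2

end Params

lemma aux_E1 (c h : ℝ) :
    h * ∫ x in (0:ℝ)..c, Real.exp (-h ^ 2 * x ^ 2 / 2) =
      Real.sqrt (2 * π) * (stdCdf (c * h) - stdCdf 0) := by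
  rcases eq_or_ne h 0 with rfl | hh
  · simp
  · have hcm := intervalIntegral.integral_comp_mul_right (a := (0:ℝ)) (b := c)
      (fun u => Real.exp (-u ^ 2 / 2)) hh
    have hcomp : ∀ x : ℝ, Real.exp (-h ^ 2 * x ^ 2 / 2) = Real.exp (-(x * h) ^ 2 / 2) := by
      intro x; congr 1; ring
    rw [intervalIntegral.integral_congr (g := fun x => Real.exp (-(x * h) ^ 2 / 2))
      (fun x _ => hcomp x), hcm]
    have hstd : ∀ u : ℝ, Real.exp (-u ^ 2 / 2) = Real.sqrt (2 * π) * stdPdf u := by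
      intro u; unfold stdPdf
      rw [← mul_assoc, mul_inv_cancel₀ sqrt2pi_pos.ne', one_mul]
    rw [intervalIntegral.integral_congr (g := fun u => Real.sqrt (2 * π) * stdPdf u)
      (fun u _ => hstd u)]
    rw [intervalIntegral.integral_const_mul]
    have hfi : ∫ u in (0 * h : ℝ)..(c * h), stdPdf u = stdCdf (c * h) - stdCdf 0 := by
      rw [zero_mul, ← intervalIntegral.integral_Iic_sub_Iic (integrableOn_stdPdf _)
        (integrableOn_stdPdf _)]
      rfl
    rw [hfi, smul_eq_mul, ← mul_assoc, mul_inv_cancel₀ hh, one_mul]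

/-- Derivative of Owen's T function in its first argument. -/
lemma hasDerivAt_owenT (c h : ℝ) :
    HasDerivAt (fun y => owenT y c) (-(stdPdf h * (stdCdf (c * h) - 2⁻¹))) h := by
  have hFcont : ∀ y : ℝ, Continuous (fun x : ℝ => Real.exp (-y ^ 2 * (1 + x ^ 2) / 2) / (1 + x ^ 2)) := by
    intro y
    apply Continuous.div (by fun_prop) (by fun_prop)
    intro x; positivity
  have hder := intervalIntegral.hasDerivAt_integral_of_dominated_loc_of_deriv_le
    (μ := volume) (a := (0:ℝ)) (b := c)
    (F := fun y x => Real.exp (-y ^ 2 * (1 + x ^ 2) / 2) / (1 + x ^ 2))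
    (F' := fun y x => -y * Real.exp (-y ^ 2 * (1 + x ^ 2) / 2))
    (x₀ := h) (bound := fun _ => |h| + 1) (Metric.ball_mem_nhds h one_pos)
    (Filter.Eventually.of_forall fun y => ((hFcont y).aestronglyMeasurable).restrict)
    ((hFcont h).intervalIntegrable _ _)
    ((by fun_prop : Continuous fun x : ℝ =>
      -h * Real.exp (-h ^ 2 * (1 + x ^ 2) / 2)).aestronglyMeasurable.restrict)
    (Filter.Eventually.of_forall fun x _ => fun y hy => ?_)
    (intervalIntegrable_const)
    (Filter.Eventually.of_forall fun x _ => fun y hy => ?_)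
  · have hval : (2 * π)⁻¹ * ∫ x in (0:ℝ)..c, -h * Real.exp (-h ^ 2 * (1 + x ^ 2) / 2) =
        -(stdPdf h * (stdCdf (c * h) - 2⁻¹)) := by
      have hsplit : ∀ x : ℝ, -h * Real.exp (-h ^ 2 * (1 + x ^ 2) / 2) =
          (-h * Real.exp (-h ^ 2 / 2)) * Real.exp (-h ^ 2 * x ^ 2 / 2) := by
        intro x
        rw [mul_assoc, ← Real.exp_add]
        congr 2
        ring
      rw [intervalIntegral.integral_congr
        (g := fun x => (-h * Real.exp (-h ^ 2 / 2)) * Real.exp (-h ^ 2 * x ^ 2 / 2))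
        (fun x _ => hsplit x), intervalIntegral.integral_const_mul]
      have : (-h * Real.exp (-h ^ 2 / 2)) * ∫ x in (0:ℝ)..c, Real.exp (-h ^ 2 * x ^ 2 / 2) =
          -Real.exp (-h ^ 2 / 2) * (h * ∫ x in (0:ℝ)..c, Real.exp (-h ^ 2 * x ^ 2 / 2)) := by ring
      rw [this, aux_E1, stdCdf_zero]
      have h2pi : (2 * π)⁻¹ * Real.sqrt (2 * π) = (Real.sqrt (2 * π))⁻¹ := by
        set u := Real.sqrt (2 * π) with hu
        have hmu : u * u = 2 * π := Real.mul_self_sqrt (by positivity)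
        rw [← hmu, mul_inv, mul_assoc, inv_mul_cancel₀ sqrt2pi_pos.ne', mul_one]
      unfold stdPdf
      rw [← h2pi]
      ring
    have hgoal := hder.2.const_mul ((2 * π)⁻¹)
    rw [hval] at hgoal
    exact hgoal
  · -- bound
    show ‖-y * Real.exp (-y ^ 2 * (1 + x ^ 2) / 2)‖ ≤ |h| + 1
    have hy1 : |y| ≤ |h| + 1 := by
      have := Metric.mem_ball.1 hy
      rw [Real.dist_eq] at this
      have h1 : |y| - |h| ≤ |y - h| := abs_sub_abs_le_abs_sub y h
      linarith
    have hexp1 : Real.exp (-y ^ 2 * (1 + x ^ 2) / 2) ≤ 1 := by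
      rw [Real.exp_le_one_iff]
      nlinarith [sq_nonneg y, sq_nonneg x, sq_nonneg (y * x)]
    rw [Real.norm_eq_abs, abs_mul, abs_neg]
    calc |y| * |Real.exp (-y ^ 2 * (1 + x ^ 2) / 2)| ≤ (|h| + 1) * 1 := by
          rw [abs_of_pos (Real.exp_pos _)]
          exact mul_le_mul hy1 hexp1 (Real.exp_pos _).le (by positivity)
      _ = |h| + 1 := mul_one _
  · -- differentiability
    have h1x : (0:ℝ) < 1 + x ^ 2 := by positivity
    have hu : HasDerivAt (fun y : ℝ => -y ^ 2 * (1 + x ^ 2) / 2) (-y * (1 + x ^ 2)) y := by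
      have h2 : (fun y : ℝ => -y ^ 2 * (1 + x ^ 2) / 2) = fun y => (-(1 + x ^ 2) / 2) * y ^ 2 := by
        funext y; ring
      rw [h2]
      have := (hasDerivAt_pow 2 y).const_mul (-(1 + x ^ 2) / 2)
      refine this.congr_deriv ?_
      ring
    have hexp := hu.exp
    have hdiv := hexp.div_const (1 + x ^ 2)
    refine hdiv.congr_deriv ?_
    field_simp

set_option maxHeartbeats 800000 in
lemma tendsto_owenT_atBot {c : ℝ} (hc : 0 ≤ c) :
    Tendsto (fun h => owenT h c) atBot (𝓝 0) := by
  have hnn : ∀ h : ℝ, 0 ≤ owenT h c := by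
    intro h
    apply mul_nonneg (by positivity)
    apply intervalIntegral.integral_nonneg hc
    intro x _
    positivity
  have hub : ∀ h : ℝ, owenT h c ≤ (2 * π)⁻¹ * (c * Real.exp (-h ^ 2 / 2)) := by
    intro h
    have hint1 : IntervalIntegrable
        (fun x : ℝ => Real.exp (-h ^ 2 * (1 + x ^ 2) / 2) / (1 + x ^ 2)) volume 0 c := by
      apply Continuous.intervalIntegrable
      apply Continuous.div (by fun_prop) (by fun_prop)
      intro x; positivity
    have hint2 : IntervalIntegrable (fun _ : ℝ => Real.exp (-h ^ 2 / 2)) volume 0 c :=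
      intervalIntegrable_const
    have hle : ∀ x ∈ Set.Icc (0:ℝ) c,
        Real.exp (-h ^ 2 * (1 + x ^ 2) / 2) / (1 + x ^ 2) ≤ Real.exp (-h ^ 2 / 2) := by
      intro x _
      have h1x : (1:ℝ) ≤ 1 + x ^ 2 := by nlinarith [sq_nonneg x]
      have he : Real.exp (-h ^ 2 * (1 + x ^ 2) / 2) ≤ Real.exp (-h ^ 2 / 2) := by
        apply Real.exp_le_exp.2
        nlinarith [sq_nonneg h, sq_nonneg (h * x)]
      have := div_le_div_of_nonneg_left (Real.exp_pos (-h ^ 2 * (1 + x ^ 2) / 2)).le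
        one_pos h1x
      rw [div_one] at this
      exact this.trans he
    have hmono := intervalIntegral.integral_mono_on hc hint1 hint2 hle
    have hconst : (∫ _ in (0:ℝ)..c, Real.exp (-h ^ 2 / 2)) = c * Real.exp (-h ^ 2 / 2) := by
      rw [intervalIntegral.integral_const, smul_eq_mul, sub_zero]
    rw [hconst] at hmono
    unfold owenT
    exact mul_le_mul_of_nonneg_left hmono (by positivity)
  have hlim : Tendsto (fun h : ℝ => (2 * π)⁻¹ * (c * Real.exp (-h ^ 2 / 2))) atBot (𝓝 0) := by
    have h1 : Tendsto (fun h : ℝ => -h ^ 2 / 2) atBot atBot := by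
      have h2 : Tendsto (fun h : ℝ => h ^ 2) atBot atTop := by
        have := (tendsto_pow_atTop (n := 2) (by norm_num)).comp
          (tendsto_abs_atBot_atTop (G := ℝ))
        refine this.congr fun h => ?_
        simp [sq_abs]
      have h3 : Tendsto (fun y : ℝ => -y) atTop atBot := tendsto_neg_atTop_atBot
      exact ((h3.comp h2).atBot_div_const two_pos)
    have := (Real.tendsto_exp_atBot.comp h1).const_mul ((2 * π)⁻¹ * c)
    simp only [mul_zero] at this
    refine this.congr fun h => ?_
    simp only [Function.comp]
    ring
  exact squeeze_zero hnn hub hlim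

section I2

variable {b : ℝ} (hb : 0 < b)

include hb in
/-- The second moment: `∫ φ(x) Φ(a+bx)² dx = Φ(ā) - 2 T(ā, 1/√(1+2b²))`. -/
lemma integral_stdPdf_mul_stdCdf_sq (a : ℝ) :
    ∫ x, stdPdf x * stdCdf (a + b * x) ^ 2 =
      stdCdf (a / Real.sqrt (1 + b ^ 2)) -
        2 * owenT (a / Real.sqrt (1 + b ^ 2)) (1 / Real.sqrt (1 + 2 * b ^ 2)) := by
  have hs : 0 < Real.sqrt (1 + b ^ 2) := Real.sqrt_pos.2 (by positivity)
  have hs2 : Real.sqrt (1 + b ^ 2) ^ 2 = 1 + b ^ 2 := Real.sq_sqrt (by positivity)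
  have hk : 0 < Real.sqrt (1 + 2 * b ^ 2) := Real.sqrt_pos.2 (by positivity)
  have hk2 : Real.sqrt (1 + 2 * b ^ 2) ^ 2 = 1 + 2 * b ^ 2 := Real.sq_sqrt (by positivity)
  set s := Real.sqrt (1 + b ^ 2) with hsdef
  set k := Real.sqrt (1 + 2 * b ^ 2) with hkdef
  -- derivative of the square of the cdf
  have hw : ∀ y : ℝ, HasDerivAt (fun y => stdCdf y ^ 2) (2 * stdCdf y * stdPdf y) y := by
    intro y
    have := (hasDerivAt_stdCdf y).fun_pow 2
    simpa using this
  have hwb : ∀ y : ℝ, |stdCdf y ^ 2| ≤ 1 := by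
    intro y
    rw [abs_pow]
    calc |stdCdf y| ^ 2 ≤ 1 ^ 2 := by
          apply pow_le_pow_left₀ (abs_nonneg _) (abs_stdCdf_le_one y)
      _ = 1 := one_pow 2
  have hw'b : ∀ y : ℝ, |2 * stdCdf y * stdPdf y| ≤ 2 * (Real.sqrt (2 * π))⁻¹ := by
    intro y
    rw [abs_mul, abs_mul, abs_two, abs_of_nonneg (stdPdf_nonneg y)]
    calc 2 * |stdCdf y| * stdPdf y ≤ 2 * 1 * (Real.sqrt (2 * π))⁻¹ := by
          apply mul_le_mul _ (stdPdf_le y) (stdPdf_nonneg y) (by positivity)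
          calc 2 * |stdCdf y| ≤ 2 * 1 := by
                exact mul_le_mul_of_nonneg_left (abs_stdCdf_le_one y) (by norm_num)
            _ = 2 * 1 := rfl
      _ = 2 * (Real.sqrt (2 * π))⁻¹ := by ring
  -- the value of the derivative integral
  have hderval : ∀ a : ℝ, ∫ x, stdPdf x * (2 * stdCdf (a + b * x) * stdPdf (a + b * x)) =
      2 * stdPdf (a / s) * (stdCdf (1 / k * (a / s)) * s⁻¹) := by
    intro a
    have hbs : 0 < b / s := div_pos hb hs
    have hpt : ∀ x : ℝ, stdPdf x * (2 * stdCdf (a + b * x) * stdPdf (a + b * x)) =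
        (2 * stdPdf (a / s)) *
          (stdPdf (s * x + a * b / s) * stdCdf (a / s ^ 2 + (b / s) * (s * x + a * b / s))) := by
      intro x
      have harg : a / s ^ 2 + (b / s) * (s * x + a * b / s) = a + b * x := by
        have h1 : a / s ^ 2 + (b / s) * (s * x + a * b / s) = a * (1 + b ^ 2) / s ^ 2 + b * x := by
          field_simp
          ring
        rw [h1, ← hs2]
        field_simp
      rw [harg]
      have hthis := stdPdf_mul (b := b) a x
      rw [← hsdef] at hthis
      linear_combination (2 * stdCdf (a + b * x)) * hthis
    rw [MeasureTheory.integral_congr_ae (Filter.Eventually.of_forall hpt),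
      MeasureTheory.integral_const_mul]
    have hG := integral_comp_affine
      (G := fun y => stdPdf y * stdCdf (a / s ^ 2 + (b / s) * y)) hs (a * b / s)
    rw [hG]
    have hJ := integral_stdPdf_mul_stdCdf hbs (a / s ^ 2)
    have hJ2 : ∫ y, stdPdf y * stdCdf (a / s ^ 2 + (b / s) * y) =
        stdCdf (a / s ^ 2 / Real.sqrt (1 + (b / s) ^ 2)) := hJ
    rw [hJ2]
    have hargc : a / s ^ 2 / Real.sqrt (1 + (b / s) ^ 2) = 1 / k * (a / s) := by
      have h1 : 1 + (b / s) ^ 2 = (k / s) ^ 2 := by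
        rw [div_pow, div_pow, hk2]
        field_simp
        linear_combination hs2
      rw [h1, Real.sqrt_sq (div_nonneg hk.le hs.le)]
      field_simp
    rw [hargc]
    ring
  -- assemble via uniqueness of antiderivatives
  refine eq_of_hasDerivAt_eq
    (f := fun a => ∫ x, stdPdf x * stdCdf (a + b * x) ^ 2)
    (g := fun a => stdCdf (a / s) - 2 * owenT (a / s) (1 / k))
    (d := fun a => 2 * stdPdf (a / s) * (stdCdf (1 / k * (a / s)) * s⁻¹))
    (fun a => ?_) (fun a => ?_) ?_ a
  · have h := hasDerivAt_param (b := b) hw (continuous_stdCdf.pow 2)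
      ((continuous_const.mul continuous_stdCdf).mul continuous_stdPdf) hwb hw'b a
    rwa [hderval a] at h
  · have hdiv : HasDerivAt (fun a : ℝ => a / s) s⁻¹ a := by
      simpa using (hasDerivAt_id a).div_const s
    have h1 := (hasDerivAt_stdCdf (a / s)).comp a hdiv
    have h2 := (hasDerivAt_owenT (1 / k) (a / s)).comp a hdiv
    have h3 := h1.sub (h2.const_mul 2)
    refine h3.congr_deriv ?_
    ring
  · have hL : Tendsto (fun a => ∫ x, stdPdf x * stdCdf (a + b * x) ^ 2) atBot (𝓝 0) := by
      apply tendsto_integral_stdPdf_mul_atBot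
      · exact fun a => (continuous_stdPdf.mul
          ((continuous_stdCdf.comp (by fun_prop)).pow 2)).aestronglyMeasurable
      · exact fun a x => hwb _
      · intro x
        have hx : Tendsto (fun a => stdCdf (a + b * x)) atBot (𝓝 0) :=
          tendsto_stdCdf_atBot.comp (tendsto_atBot_add_const_right _ (b * x) tendsto_id)
        have := hx.mul hx
        rw [mul_zero] at this
        refine this.congr fun a => ?_
        ring
    have hdb : Tendsto (fun a : ℝ => a / s) atBot atBot := tendsto_id.atBot_div_const hs
    have hR1 : Tendsto (fun a : ℝ => stdCdf (a / s)) atBot (𝓝 0) :=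
      tendsto_stdCdf_atBot.comp hdb
    have hR2 : Tendsto (fun a : ℝ => owenT (a / s) (1 / k)) atBot (𝓝 0) :=
      (tendsto_owenT_atBot (by positivity)).comp hdb
    have := hL.sub (hR1.sub (hR2.const_mul 2))
    simpa using this

end I2

/-- Reduction of a Gaussian expectation to an integral against the standard pdf. -/
lemma integral_gaussianReal_comp (μ σ : ℝ) (hσ : 0 < σ) (g : ℝ → ℝ) (hg : Continuous g)
    (h0 : ∀ x, 0 ≤ g x) (h1 : ∀ x, g x ≤ 1) :
    ∫ x, g x ∂(ProbabilityTheory.gaussianReal μ ⟨σ ^ 2, sq_nonneg σ⟩) =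
      ∫ x, stdPdf x * g (μ + σ * x) := by
  set v : ℝ≥0 := ⟨σ ^ 2, sq_nonneg σ⟩ with hv_def
  have hσ' : σ ≠ 0 := hσ.ne'
  have hvr : (v : ℝ) = σ ^ 2 := rfl
  have hv : v ≠ 0 := by
    intro h
    have h2 : (v : ℝ) = 0 := by rw [h]; simp
    rw [hvr] at h2
    exact (pow_pos hσ 2).ne' h2
  rw [ProbabilityTheory.gaussianReal_of_var_ne_zero μ hv]
  have hpdf_eq : ProbabilityTheory.gaussianPDF μ v =
      fun x => ((Real.toNNReal (ProbabilityTheory.gaussianPDFReal μ v x)) : ℝ≥0∞) := rfl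
  rw [hpdf_eq, integral_withDensity_eq_integral_smul
    ((ProbabilityTheory.measurable_gaussianPDFReal μ v).real_toNNReal) g]
  have hsmul : ∀ x, (Real.toNNReal (ProbabilityTheory.gaussianPDFReal μ v x)) • g x =
      ProbabilityTheory.gaussianPDFReal μ v x * g x := by
    intro x
    rw [NNReal.smul_def, Real.coe_toNNReal _ (ProbabilityTheory.gaussianPDFReal_nonneg μ v x),
      smul_eq_mul]
  rw [MeasureTheory.integral_congr_ae (Filter.Eventually.of_forall hsmul)]
  have hsub := integral_comp_affine
    (G := fun x => ProbabilityTheory.gaussianPDFReal μ v x * g x) hσ μ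
  have hEq : ∫ x, ProbabilityTheory.gaussianPDFReal μ v x * g x =
      σ * ∫ x, ProbabilityTheory.gaussianPDFReal μ v (σ * x + μ) * g (σ * x + μ) := by
    rw [hsub, ← mul_assoc, mul_inv_cancel₀ hσ', one_mul]
  rw [hEq, ← MeasureTheory.integral_const_mul]
  refine MeasureTheory.integral_congr_ae (Filter.Eventually.of_forall fun x => ?_)
  have hsq : Real.sqrt (2 * π * (v : ℝ)) = Real.sqrt (2 * π) * σ := by
    rw [hvr, Real.sqrt_mul (by positivity), Real.sqrt_sq hσ.le]
  have harg : σ * x + μ = μ + σ * x := by ring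
  unfold ProbabilityTheory.gaussianPDFReal
  beta_reduce
  rw [hsq, harg]
  have hexp : -(μ + σ * x - μ) ^ 2 / (2 * (v : ℝ)) = -x ^ 2 / 2 := by
    rw [hvr]
    field_simp
    ring
  rw [hexp]
  unfold stdPdf
  rw [mul_inv]
  field_simp

end OwenAux

theorem stmt_4 (μ σ : ℝ) (hσ : 0 < σ) :
    (∫ x, stdCdf x ^ 2 ∂(ProbabilityTheory.gaussianReal μ ⟨σ ^ 2, sq_nonneg σ⟩)) -
        (∫ x, stdCdf x ∂(ProbabilityTheory.gaussianReal μ ⟨σ ^ 2, sq_nonneg σ⟩)) ^ 2 =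
      stdCdf (μ / Real.sqrt (1 + σ ^ 2)) - stdCdf (μ / Real.sqrt (1 + σ ^ 2)) ^ 2 -
        2 * owenT (μ / Real.sqrt (1 + σ ^ 2)) (1 / Real.sqrt (1 + 2 * σ ^ 2)) := by
  have h1 : ∫ x, stdCdf x ∂(ProbabilityTheory.gaussianReal μ ⟨σ ^ 2, sq_nonneg σ⟩) =
      stdCdf (μ / Real.sqrt (1 + σ ^ 2)) := by
    rw [OwenAux.integral_gaussianReal_comp μ σ hσ stdCdf OwenAux.continuous_stdCdf
      OwenAux.stdCdf_nonneg OwenAux.stdCdf_le_one]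
    exact OwenAux.integral_stdPdf_mul_stdCdf hσ μ
  have h2 : ∫ x, stdCdf x ^ 2 ∂(ProbabilityTheory.gaussianReal μ ⟨σ ^ 2, sq_nonneg σ⟩) =
      stdCdf (μ / Real.sqrt (1 + σ ^ 2)) -
        2 * owenT (μ / Real.sqrt (1 + σ ^ 2)) (1 / Real.sqrt (1 + 2 * σ ^ 2)) := by
    have hg0 : ∀ x : ℝ, 0 ≤ stdCdf x ^ 2 := fun x => sq_nonneg _
    have hg1 : ∀ x : ℝ, stdCdf x ^ 2 ≤ 1 := fun x => by
      nlinarith [OwenAux.stdCdf_nonneg x, OwenAux.stdCdf_le_one x, sq_nonneg (stdCdf x - 1)]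
    rw [OwenAux.integral_gaussianReal_comp μ σ hσ (fun x => stdCdf x ^ 2)
      (OwenAux.continuous_stdCdf.pow 2) hg0 hg1]
    exact OwenAux.integral_stdPdf_mul_stdCdf_sq hσ μ
  rw [h1, h2]; ring
end

section
/- Let (f_q, f_*) be jointly Gaussian with means μ_q, μ_*, variances σ_q², σ_*² > 0 and covariance σ_{q*}, and let y_* be Bernoulli with P(y_* = 1 | f_*) = Φ(f_*). Then P(f_q ≤ γ | y_* = 0) = (Φ(b_q) − Z) / Φ(−a_*), where Z = BvN(a_*, b_q; −σ_{q*}/(σ_q√(1+σ_*²))), a_* = μ_*/√(1+σ_*²), and b_q = (γ−μ_q)/σ_q. -/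
open MeasureTheory Real

open Set


/-- Gaussian density with mean m and variance v. -/
noncomputable def g (m v x : ℝ) : ℝ :=
  (Real.sqrt (2 * π * v))⁻¹ * Real.exp (-(x - m) ^ 2 / (2 * v))




lemma g_nonneg (m v x : ℝ) : 0 ≤ g m v x := by
  unfold g; positivity

lemma g_continuous (m v : ℝ) : Continuous (g m v) := by
  unfold g; fun_prop

lemma stdPdf_eq (x : ℝ) : stdPdf x = g 0 1 x := by
  simp [stdPdf, g]

lemma g_eq_exp_mul (m v : ℝ) (hv : 0 < v) :
    g m v = fun x => (Real.sqrt (2 * π * v))⁻¹ * Real.exp (-((2*v)⁻¹) * (x - m) ^ 2) := by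
  funext x
  unfold g
  congr 1
  rw [neg_div, div_eq_inv_mul, neg_mul]

lemma g_integrable {v : ℝ} (m : ℝ) (hv : 0 < v) : Integrable (g m v) := by
  rw [g_eq_exp_mul m v hv]
  exact (((integrable_exp_neg_mul_sq (by positivity)).const_mul _).comp_sub_right m)

lemma g_integral {v : ℝ} (m : ℝ) (hv : 0 < v) : ∫ x, g m v x = 1 := by
  rw [g_eq_exp_mul m v hv]
  simp only [integral_const_mul]
  rw [integral_sub_right_eq_self (fun x => Real.exp (-((2*v)⁻¹) * x ^ 2)) m]
  rw [integral_gaussian]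
  rw [inv_mul_eq_one₀ (by positivity)]
  congr 1
  field_simp

lemma map_affine_volume {c : ℝ} (hc : c ≠ 0) (d : ℝ) :
    Measure.map (fun u : ℝ => c * u + d) volume = ENNReal.ofReal |c⁻¹| • volume := by
  rw [show (fun u : ℝ => c * u + d) = (fun x : ℝ => x + d) ∘ (fun u => c * u) from rfl,
    ← Measure.map_map (by fun_prop) (by fun_prop), Real.map_volume_mul_left hc,
    Measure.map_smul, map_add_right_eq_self volume d]

lemma affine_measurableEmbedding {c : ℝ} (hc : c ≠ 0) (d : ℝ) :
    MeasurableEmbedding (fun u : ℝ => c * u + d) := by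
  have : (fun u : ℝ => c * u + d) = fun u : ℝ => (affineHomeomorph c d hc) u := by
    funext u; simp [affineHomeomorph]
  rw [this]
  exact (affineHomeomorph c d hc).isClosedEmbedding.measurableEmbedding

lemma affine_preimage_Iic {c : ℝ} (hc : 0 < c) (d t : ℝ) :
    (fun u : ℝ => c * u + d) ⁻¹' (Iic t) = Iic ((t - d) / c) := by
  ext u
  simp only [mem_preimage, mem_Iic, le_div_iff₀ hc]
  constructor <;> intro h <;> nlinarith

lemma setIntegral_Iic_comp_affine (f : ℝ → ℝ) {c : ℝ} (hc : 0 < c) (d t : ℝ) :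
    ∫ x in Iic t, f x = c * ∫ u in Iic ((t - d) / c), f (c * u + d) := by
  have h1 : ∫ x in Iic t, f x ∂(Measure.map (fun u : ℝ => c * u + d) volume)
      = ∫ u in (fun u : ℝ => c * u + d) ⁻¹' (Iic t), f (c * u + d) ∂volume :=
    (affine_measurableEmbedding hc.ne' d).setIntegral_map f (Iic t)
  rw [map_affine_volume hc.ne' d] at h1
  rw [affine_preimage_Iic hc d t] at h1
  rw [Measure.restrict_smul, integral_smul_measure] at h1
  rw [ENNReal.toReal_ofReal (abs_nonneg _), abs_of_pos (inv_pos.mpr hc)] at h1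
  rw [← h1, smul_eq_mul, ← mul_assoc, mul_inv_cancel₀ hc.ne', one_mul]

lemma sqrt_two_pi_mul {v : ℝ} (hv : 0 ≤ v) :
    Real.sqrt (2 * π * v) = Real.sqrt (2 * π) * Real.sqrt v := by
  rw [← Real.sqrt_mul (by positivity)]

lemma g_affine_eq_stdPdf (m : ℝ) {v : ℝ} (hv : 0 < v) (u : ℝ) :
    Real.sqrt v * g m v (Real.sqrt v * u + m) = stdPdf u := by
  unfold g stdPdf
  have h1 : (Real.sqrt v * u + m - m) ^ 2 = v * u ^ 2 := by
    rw [add_sub_cancel_right, mul_pow, Real.sq_sqrt hv.le]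
  rw [h1, sqrt_two_pi_mul hv.le, mul_inv]
  have hsv : Real.sqrt v ≠ 0 := by positivity
  have h2 : -(v * u ^ 2) / (2 * v) = -u ^ 2 / 2 := by
    field_simp
  rw [h2]; field_simp

lemma setIntegral_g_Iic (m : ℝ) {v : ℝ} (hv : 0 < v) (t : ℝ) :
    ∫ x in Iic t, g m v x = stdCdf ((t - m) / Real.sqrt v) := by
  rw [setIntegral_Iic_comp_affine (g m v) (Real.sqrt_pos.mpr hv) m t, ← integral_const_mul]
  unfold stdCdf
  exact setIntegral_congr_fun measurableSet_Iic fun u _ => g_affine_eq_stdPdf m hv u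

lemma stdPdf_integrable : Integrable stdPdf := by
  simp only [funext stdPdf_eq]
  exact g_integrable 0 one_pos

lemma stdPdf_nonneg (x : ℝ) : 0 ≤ stdPdf x := by unfold stdPdf; positivity

lemma integral_stdPdf : ∫ x, stdPdf x = 1 := by
  simp only [funext stdPdf_eq]
  exact g_integral 0 one_pos

lemma stdCdf_nonneg (t : ℝ) : 0 ≤ stdCdf t :=
  setIntegral_nonneg measurableSet_Iic fun x _ => stdPdf_nonneg x

lemma stdCdf_le_one (t : ℝ) : stdCdf t ≤ 1 := by
  rw [← integral_stdPdf]
  exact setIntegral_le_integral stdPdf_integrable (ae_of_all _ stdPdf_nonneg)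

lemma stdCdf_mono : Monotone stdCdf := fun a b hab =>
  setIntegral_mono_set stdPdf_integrable.integrableOn
    (ae_of_all _ stdPdf_nonneg) (HasSubset.Subset.eventuallyLE (Iic_subset_Iic.mpr hab))

lemma stdCdf_measurable : Measurable stdCdf := stdCdf_mono.measurable

lemma stdCdf_neg (t : ℝ) : stdCdf (-t) = 1 - stdCdf t := by
  have h1 : stdCdf (-t) = ∫ x in Ioi t, stdPdf x := by
    unfold stdCdf
    rw [← integral_comp_neg_Ioi]
    refine setIntegral_congr_fun measurableSet_Ioi fun x _ => ?_
    unfold stdPdf; rw [neg_sq]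
  have h2 : stdCdf t + ∫ x in Ioi t, stdPdf x = 1 := by
    rw [← integral_stdPdf]
    unfold stdCdf
    rw [← setIntegral_union (Iic_disjoint_Ioi le_rfl) measurableSet_Ioi
      stdPdf_integrable.integrableOn stdPdf_integrable.integrableOn, Iic_union_Ioi,
      setIntegral_univ]
  rw [h1]; linarith

lemma integrable_bounded_mul {φ h : ℝ → ℝ} {μ : Measure ℝ} (hφm : AEStronglyMeasurable φ μ)
    (hφ0 : ∀ x, 0 ≤ φ x) (hφ1 : ∀ x, φ x ≤ 1)
    (hh : Integrable h μ) : Integrable (fun x => φ x * h x) μ := by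
  refine hh.mono (hφm.mul hh.aestronglyMeasurable) (ae_of_all _ fun x => ?_)
  rw [norm_mul, Real.norm_of_nonneg (hφ0 x)]
  nlinarith [hφ0 x, hφ1 x, norm_nonneg (h x)]

lemma conv_identity (m : ℝ) {v : ℝ} (hv : 0 < v) (t y : ℝ) :
    stdPdf (t - y) * g m v y = g m (1 + v) t * g ((m + v * t) / (1 + v)) (v / (1 + v)) y := by
  have h1v : (0:ℝ) < 1 + v := by linarith
  unfold stdPdf g
  rw [mul_mul_mul_comm, mul_mul_mul_comm ((Real.sqrt (2 * π * (1+v)))⁻¹), ← Real.exp_add,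
    ← Real.exp_add]
  congr 1
  · rw [← mul_inv, ← mul_inv, ← Real.sqrt_mul (by positivity), ← Real.sqrt_mul (by positivity)]
    congr 2
    field_simp
  · congr 1
    field_simp
    ring

lemma integral_conv (m : ℝ) {v : ℝ} (hv : 0 < v) (t : ℝ) :
    ∫ y, stdPdf (t - y) * g m v y = g m (1 + v) t := by
  simp_rw [conv_identity m hv t]
  rw [integral_const_mul, g_integral _ (by positivity), mul_one]

lemma stdCdf_neg_eq_integral (y : ℝ) :
    stdCdf (-y) = ∫ t in Iic (0:ℝ), stdPdf (t - y) := by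
  unfold stdCdf
  rw [setIntegral_Iic_comp_affine stdPdf one_pos (-y) (-y)]
  simp only [one_mul, neg_sub_neg, sub_self, zero_div]
  refine setIntegral_congr_fun measurableSet_Iic fun u _ => ?_
  rw [← sub_eq_add_neg]

lemma key_integral (m : ℝ) {v : ℝ} (hv : 0 < v) :
    ∫ y, stdCdf (-y) * g m v y = stdCdf (-(m / Real.sqrt (1 + v))) := by
  have h1v : (0:ℝ) < 1 + v := by linarith
  have hF : Integrable (Function.uncurry fun y t => stdPdf (t - y) * g m v y)
      (volume.prod (volume.restrict (Iic (0:ℝ)))) := by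
    have hmes : AEStronglyMeasurable (Function.uncurry fun y t => stdPdf (t - y) * g m v y)
        (volume.prod (volume.restrict (Iic (0:ℝ)))) := by
      apply Continuous.aestronglyMeasurable
      apply Continuous.mul
      · exact stdPdf_continuous.comp (continuous_snd.sub continuous_fst)
      · exact (g_continuous m v).comp continuous_fst
    rw [integrable_prod_iff hmes]
    constructor
    · refine ae_of_all _ fun y => ?_
      exact ((stdPdf_integrable.comp_sub_right y).mul_const (g m v y)).restrict
    · have heq : (fun y => ∫ t in Iic (0:ℝ), ‖stdPdf (t - y) * g m v y‖)
          = fun y => stdCdf (-y) * g m v y := by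
        funext y
        rw [stdCdf_neg_eq_integral, ← integral_mul_const]
        refine setIntegral_congr_fun measurableSet_Iic fun t _ => ?_
        rw [norm_mul, Real.norm_of_nonneg (stdPdf_nonneg _),
          Real.norm_of_nonneg (g_nonneg m v y)]
      simp only [Function.uncurry] at heq ⊢
      rw [heq]
      exact integrable_bounded_mul
        ((stdCdf_measurable.comp measurable_neg).aestronglyMeasurable)
        (fun y => stdCdf_nonneg _) (fun y => stdCdf_le_one _) (g_integrable m hv)
  have step1 : ∀ y, stdCdf (-y) * g m v y = ∫ t in Iic (0:ℝ), stdPdf (t - y) * g m v y :=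
    fun y => by rw [stdCdf_neg_eq_integral, ← integral_mul_const]
  simp_rw [step1]
  rw [integral_integral_swap hF]
  simp_rw [integral_conv m hv]
  rw [setIntegral_g_Iic m h1v 0, zero_sub, neg_div]





lemma integrable_mul_bounded {φ h : ℝ → ℝ} {μ : Measure ℝ} (hφm : AEStronglyMeasurable φ μ)
    (hφ0 : ∀ x, 0 ≤ φ x) (hφ1 : ∀ x, φ x ≤ 1)
    (hh : Integrable h μ) : Integrable (fun x => h x * φ x) μ := by
  have := integrable_bounded_mul hφm hφ0 hφ1 hh
  simpa [mul_comm] using this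



lemma bvnPdf_factor {ρ : ℝ} (hρ : ρ ^ 2 < 1) (x y : ℝ) :
    bvnPdf ρ x y = stdPdf y * g (ρ * y) (1 - ρ ^ 2) x := by
  have hw : (0:ℝ) < 1 - ρ ^ 2 := by linarith
  unfold bvnPdf stdPdf g
  rw [div_eq_mul_inv, mul_comm (Real.exp _), mul_mul_mul_comm, ← Real.exp_add]
  congr 1
  · rw [← mul_inv, ← Real.sqrt_mul (by positivity)]
    congr 1
    rw [show (2*π) * (2*π*(1 - ρ^2)) = (2*π)^2 * (1 - ρ^2) by ring,
      Real.sqrt_mul (by positivity), Real.sqrt_sq (by positivity)]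
  · field_simp
    ring

lemma biGaussPdf_factor_x {μ₁ μ₂ σ₁ σ₂ σ₁₂ : ℝ} (h₁ : 0 < σ₁)
    (hΔ : σ₁₂ ^ 2 < σ₁ ^ 2 * σ₂ ^ 2) (x y : ℝ) :
    biGaussPdf μ₁ μ₂ σ₁ σ₂ σ₁₂ x y =
      g μ₁ (σ₁ ^ 2) x *
        g (μ₂ + σ₁₂ / σ₁ ^ 2 * (x - μ₁)) ((σ₁ ^ 2 * σ₂ ^ 2 - σ₁₂ ^ 2) / σ₁ ^ 2) y := by
  have hΔ' : (0:ℝ) < σ₁ ^ 2 * σ₂ ^ 2 - σ₁₂ ^ 2 := by linarith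
  unfold biGaussPdf g
  rw [div_eq_mul_inv, mul_comm (Real.exp _), mul_mul_mul_comm, ← Real.exp_add]
  congr 1
  · rw [← mul_inv, ← Real.sqrt_mul (by positivity)]
    congr 1
    rw [show (2*π*σ₁^2) * (2*π*((σ₁^2*σ₂^2 - σ₁₂^2)/σ₁^2))
        = (2*π)^2 * (σ₁^2*σ₂^2 - σ₁₂^2) by field_simp,
      Real.sqrt_mul (by positivity), Real.sqrt_sq (by positivity)]
  · congr 1
    rw [div_add_div _ _ (by positivity) (mul_pos two_pos (div_pos hΔ' (by positivity))).ne',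
      div_eq_div_iff (by positivity)
        (mul_ne_zero (by positivity) (mul_pos two_pos (div_pos hΔ' (by positivity))).ne')]
    field_simp
    ring

lemma biGaussPdf_factor_y {μ₁ μ₂ σ₁ σ₂ σ₁₂ : ℝ} (h₂ : 0 < σ₂)
    (hΔ : σ₁₂ ^ 2 < σ₁ ^ 2 * σ₂ ^ 2) (x y : ℝ) :
    biGaussPdf μ₁ μ₂ σ₁ σ₂ σ₁₂ x y =
      g μ₂ (σ₂ ^ 2) y *
        g (μ₁ + σ₁₂ / σ₂ ^ 2 * (y - μ₂)) ((σ₁ ^ 2 * σ₂ ^ 2 - σ₁₂ ^ 2) / σ₂ ^ 2) x := by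
  have hΔ' : (0:ℝ) < σ₁ ^ 2 * σ₂ ^ 2 - σ₁₂ ^ 2 := by linarith
  unfold biGaussPdf g
  rw [div_eq_mul_inv, mul_comm (Real.exp _), mul_mul_mul_comm, ← Real.exp_add]
  congr 1
  · rw [← mul_inv, ← Real.sqrt_mul (by positivity)]
    congr 1
    rw [show (2*π*σ₂^2) * (2*π*((σ₁^2*σ₂^2 - σ₁₂^2)/σ₂^2))
        = (2*π)^2 * (σ₁^2*σ₂^2 - σ₁₂^2) by field_simp,
      Real.sqrt_mul (by positivity), Real.sqrt_sq (by positivity)]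
  · congr 1
    rw [div_add_div _ _ (by positivity) (mul_pos two_pos (div_pos hΔ' (by positivity))).ne',
      div_eq_div_iff (by positivity)
        (mul_ne_zero (by positivity) (mul_pos two_pos (div_pos hΔ' (by positivity))).ne')]
    field_simp
    ring

lemma bvnPdf_continuous (ρ : ℝ) : Continuous fun p : ℝ × ℝ => bvnPdf ρ p.1 p.2 := by
  unfold bvnPdf; fun_prop

lemma bvn_eq {ρ : ℝ} (hρ : ρ ^ 2 < 1) (a b : ℝ) :
    bvn a b ρ = ∫ y in Iic b, stdPdf y * stdCdf ((a - ρ * y) / Real.sqrt (1 - ρ ^ 2)) := by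
  have hw : (0:ℝ) < 1 - ρ ^ 2 := by linarith
  have hnorm : ∀ y : ℝ, (∫ x in Iic a, ‖stdPdf y * g (ρ * y) (1 - ρ ^ 2) x‖)
      = stdPdf y * stdCdf ((a - ρ * y) / Real.sqrt (1 - ρ ^ 2)) := by
    intro y
    rw [← setIntegral_g_Iic _ hw a, ← integral_const_mul]
    refine setIntegral_congr_fun measurableSet_Iic fun x _ => ?_
    rw [norm_mul, Real.norm_of_nonneg (stdPdf_nonneg _), Real.norm_of_nonneg (g_nonneg _ _ _)]
  have hint : Integrable (fun p : ℝ × ℝ => bvnPdf ρ p.1 p.2)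
      ((volume.restrict (Iic a)).prod (volume.restrict (Iic b))) := by
    have hmes : AEStronglyMeasurable (fun p : ℝ × ℝ => bvnPdf ρ p.1 p.2)
        ((volume.restrict (Iic a)).prod (volume.restrict (Iic b))) :=
      (bvnPdf_continuous ρ).aestronglyMeasurable
    rw [integrable_prod_iff' hmes]
    constructor
    · refine ae_of_all _ fun y => ?_
      simp_rw [bvnPdf_factor hρ]
      exact ((g_integrable (ρ * y) hw).restrict).const_mul (stdPdf y)
    · simp_rw [bvnPdf_factor hρ, hnorm]
      refine integrable_mul_bounded ?_ (fun y => stdCdf_nonneg _) (fun y => stdCdf_le_one _)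
        stdPdf_integrable.restrict
      exact (stdCdf_measurable.comp (by fun_prop)).aestronglyMeasurable
  unfold bvn
  rw [Measure.volume_eq_prod, ← Measure.prod_restrict, integral_prod_symm _ hint]
  refine setIntegral_congr_fun measurableSet_Iic fun y _ => ?_
  simp_rw [bvnPdf_factor hρ]
  rw [integral_const_mul, setIntegral_g_Iic _ hw a]

lemma stdCdf_sub_bvn {ρ : ℝ} (hρ : ρ ^ 2 < 1) (a b : ℝ) :
    stdCdf b - bvn a b ρ
      = ∫ u in Iic b, stdPdf u * stdCdf ((ρ * u - a) / Real.sqrt (1 - ρ ^ 2)) := by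
  have hw : (0:ℝ) < 1 - ρ ^ 2 := by linarith
  rw [bvn_eq hρ]
  have h1 : stdCdf b = ∫ u in Iic b, stdPdf u := rfl
  have hint2 : Integrable (fun y => stdPdf y * stdCdf ((a - ρ * y) / Real.sqrt (1 - ρ ^ 2)))
      (volume.restrict (Iic b)) :=
    integrable_mul_bounded ((stdCdf_measurable.comp (by fun_prop)).aestronglyMeasurable)
      (fun y => stdCdf_nonneg _) (fun y => stdCdf_le_one _) stdPdf_integrable.restrict
  rw [h1, ← integral_sub stdPdf_integrable.restrict hint2]
  refine setIntegral_congr_fun measurableSet_Iic fun u _ => ?_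
  have : (ρ * u - a) / Real.sqrt (1 - ρ ^ 2) = -((a - ρ * u) / Real.sqrt (1 - ρ ^ 2)) := by
    rw [← neg_div, neg_sub]
  rw [this, stdCdf_neg]
  ring

lemma biGaussPdf_continuous (μ₁ μ₂ σ₁ σ₂ σ₁₂ : ℝ) :
    Continuous fun p : ℝ × ℝ => biGaussPdf μ₁ μ₂ σ₁ σ₂ σ₁₂ p.1 p.2 := by
  unfold biGaussPdf; fun_prop

lemma den_eq (μq μs σq σs σqs : ℝ) (hq : 0 < σq) (hs : 0 < σs)
    (hcov : σqs ^ 2 < σq ^ 2 * σs ^ 2) :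
    (∫ p : ℝ × ℝ, (1 - stdCdf p.2) * biGaussPdf μq μs σq σs σqs p.1 p.2)
      = stdCdf (-(μs / Real.sqrt (1 + σs ^ 2))) := by
  have hs2 : (0:ℝ) < σs ^ 2 := by positivity
  have hv : (0:ℝ) < (σq ^ 2 * σs ^ 2 - σqs ^ 2) / σs ^ 2 := by
    apply div_pos (by linarith) hs2
  have hfac : ∀ x y : ℝ, (1 - stdCdf y) * biGaussPdf μq μs σq σs σqs x y
      = stdCdf (-y) * g μs (σs ^ 2) y * g (μq + σqs / σs ^ 2 * (y - μs))
          ((σq ^ 2 * σs ^ 2 - σqs ^ 2) / σs ^ 2) x := by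
    intro x y
    rw [biGaussPdf_factor_y hs hcov, ← stdCdf_neg]
    ring
  have hnorm : ∀ y : ℝ, (∫ x, ‖(1 - stdCdf y) * biGaussPdf μq μs σq σs σqs x y‖)
      = stdCdf (-y) * g μs (σs ^ 2) y := by
    intro y
    have : ∀ x, ‖(1 - stdCdf y) * biGaussPdf μq μs σq σs σqs x y‖
        = stdCdf (-y) * g μs (σs ^ 2) y * g (μq + σqs / σs ^ 2 * (y - μs))
          ((σq ^ 2 * σs ^ 2 - σqs ^ 2) / σs ^ 2) x := by
      intro x
      rw [hfac x y, norm_mul, Real.norm_of_nonneg (g_nonneg _ _ _),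
        Real.norm_of_nonneg (mul_nonneg (stdCdf_nonneg _) (g_nonneg _ _ _))]
    simp_rw [this]
    rw [integral_const_mul, g_integral _ hv, mul_one]
  have hmes : AEStronglyMeasurable
      (fun p : ℝ × ℝ => (1 - stdCdf p.2) * biGaussPdf μq μs σq σs σqs p.1 p.2)
      (volume.prod volume) := by
    refine AEStronglyMeasurable.mul ?_ (biGaussPdf_continuous μq μs σq σs σqs).aestronglyMeasurable
    exact (measurable_const.sub (stdCdf_measurable.comp measurable_snd)).aestronglyMeasurable
  have hint : Integrable (fun p : ℝ × ℝ => (1 - stdCdf p.2) * biGaussPdf μq μs σq σs σqs p.1 p.2)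
      (volume.prod volume) := by
    rw [integrable_prod_iff' hmes]
    constructor
    · refine ae_of_all _ fun y => ?_
      simp_rw [hfac]
      exact (g_integrable _ hv).const_mul _
    · simp_rw [hnorm]
      refine integrable_bounded_mul
        ((stdCdf_measurable.comp measurable_neg).aestronglyMeasurable)
        (fun y => stdCdf_nonneg _) (fun y => stdCdf_le_one _) (g_integrable _ hs2)
  rw [Measure.volume_eq_prod, integral_prod_symm _ hint]
  have hinner : ∀ y : ℝ, (∫ x, (1 - stdCdf y) * biGaussPdf μq μs σq σs σqs x y)
      = stdCdf (-y) * g μs (σs ^ 2) y := by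
    intro y
    simp_rw [hfac]
    rw [integral_const_mul, g_integral _ hv, mul_one]
  simp_rw [hinner]
  exact key_integral μs hs2

lemma num_eq (μq μs σq σs σqs γ : ℝ) (hq : 0 < σq) (hs : 0 < σs)
    (hcov : σqs ^ 2 < σq ^ 2 * σs ^ 2) :
    (∫ p : ℝ × ℝ in Set.Iic γ ×ˢ Set.univ,
        (1 - stdCdf p.2) * biGaussPdf μq μs σq σs σqs p.1 p.2)
      = ∫ u in Iic ((γ - μq) / σq),
          stdPdf u * stdCdf (-((μs + σqs / σq ^ 2 * (σq * u)) /
            Real.sqrt (1 + (σq ^ 2 * σs ^ 2 - σqs ^ 2) / σq ^ 2))) := by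
  have hq2 : (0:ℝ) < σq ^ 2 := by positivity
  have hv : (0:ℝ) < (σq ^ 2 * σs ^ 2 - σqs ^ 2) / σq ^ 2 := div_pos (by linarith) hq2
  set v : ℝ := (σq ^ 2 * σs ^ 2 - σqs ^ 2) / σq ^ 2 with hvdef
  set mf : ℝ → ℝ := fun x => μs + σqs / σq ^ 2 * (x - μq) with hmf
  have hfac : ∀ x y : ℝ, (1 - stdCdf y) * biGaussPdf μq μs σq σs σqs x y
      = g μq (σq ^ 2) x * (stdCdf (-y) * g (mf x) v y) := by
    intro x y
    rw [biGaussPdf_factor_x hq hcov, ← stdCdf_neg]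
    ring
  have hinner : ∀ x : ℝ, (∫ y, g μq (σq ^ 2) x * (stdCdf (-y) * g (mf x) v y))
      = g μq (σq ^ 2) x * stdCdf (-(mf x / Real.sqrt (1 + v))) := by
    intro x
    rw [integral_const_mul, key_integral (mf x) hv]
  have hφm : Measurable fun x => stdCdf (-(mf x / Real.sqrt (1 + v))) := by
    apply stdCdf_measurable.comp
    fun_prop
  have hmes : AEStronglyMeasurable
      (fun p : ℝ × ℝ => (1 - stdCdf p.2) * biGaussPdf μq μs σq σs σqs p.1 p.2)
      ((volume.restrict (Iic γ)).prod volume) := by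
    refine AEStronglyMeasurable.mul ?_ (biGaussPdf_continuous μq μs σq σs σqs).aestronglyMeasurable
    exact (measurable_const.sub (stdCdf_measurable.comp measurable_snd)).aestronglyMeasurable
  have hint : Integrable (fun p : ℝ × ℝ => (1 - stdCdf p.2) * biGaussPdf μq μs σq σs σqs p.1 p.2)
      ((volume.restrict (Iic γ)).prod volume) := by
    rw [integrable_prod_iff hmes]
    constructor
    · refine ae_of_all _ fun x => ?_
      simp_rw [hfac]
      exact (integrable_bounded_mul ((stdCdf_measurable.comp measurable_neg).aestronglyMeasurable)
        (fun y => stdCdf_nonneg _) (fun y => stdCdf_le_one _) (g_integrable (mf x) hv)).const_mul _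
    · have hnorm : ∀ x : ℝ, (∫ y, ‖(1 - stdCdf y) * biGaussPdf μq μs σq σs σqs x y‖)
          = g μq (σq ^ 2) x * stdCdf (-(mf x / Real.sqrt (1 + v))) := by
        intro x
        rw [← hinner x]
        refine integral_congr_ae (ae_of_all _ fun y => ?_)
        beta_reduce
        rw [hfac x y, norm_mul, Real.norm_of_nonneg (g_nonneg _ _ _),
          Real.norm_of_nonneg (mul_nonneg (stdCdf_nonneg _) (g_nonneg _ _ _))]
      simp_rw [hnorm]
      exact integrable_mul_bounded hφm.aestronglyMeasurable
        (fun x => stdCdf_nonneg _) (fun x => stdCdf_le_one _) (g_integrable μq hq2).restrict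
  rw [Measure.volume_eq_prod,
    show ((volume : Measure ℝ).prod volume).restrict (Iic γ ×ˢ univ)
        = (volume.restrict (Iic γ)).prod volume by
      rw [← Measure.prod_restrict, Measure.restrict_univ],
    integral_prod _ hint]
  have step : ∀ x : ℝ, (∫ y, (1 - stdCdf y) * biGaussPdf μq μs σq σs σqs x y)
      = g μq (σq ^ 2) x * stdCdf (-(mf x / Real.sqrt (1 + v))) := by
    intro x
    rw [← hinner x]
    exact integral_congr_ae (ae_of_all _ fun y => by beta_reduce; rw [hfac x y])
  simp_rw [step]
  rw [setIntegral_Iic_comp_affine _ hq μq γ, ← integral_const_mul]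
  refine setIntegral_congr_fun measurableSet_Iic fun u _ => ?_
  have h1 : σq * g μq (σq ^ 2) (σq * u + μq) = stdPdf u := by
    have := g_affine_eq_stdPdf μq hq2 u
    rwa [Real.sqrt_sq hq.le] at this
  have h2 : mf (σq * u + μq) = μs + σqs / σq ^ 2 * (σq * u) := by
    rw [hmf]; simp
  rw [← mul_assoc, h1, h2]


theorem stmt_8 (μq μs σq σs σqs γ : ℝ) (hq : 0 < σq) (hs : 0 < σs)
    (hcov : σqs ^ 2 < σq ^ 2 * σs ^ 2) :
    (∫ p : ℝ × ℝ in Set.Iic γ ×ˢ Set.univ,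
          (1 - stdCdf p.2) * biGaussPdf μq μs σq σs σqs p.1 p.2) /
        (∫ p : ℝ × ℝ, (1 - stdCdf p.2) * biGaussPdf μq μs σq σs σqs p.1 p.2) =
      (stdCdf ((γ - μq) / σq) -
          bvn (μs / Real.sqrt (1 + σs ^ 2)) ((γ - μq) / σq)
            (-σqs / (σq * Real.sqrt (1 + σs ^ 2)))) /
        stdCdf (-(μs / Real.sqrt (1 + σs ^ 2))) := by
  have hS : (0:ℝ) < Real.sqrt (1 + σs ^ 2) := Real.sqrt_pos.mpr (by positivity)
  have hS2 : Real.sqrt (1 + σs ^ 2) ^ 2 = 1 + σs ^ 2 := Real.sq_sqrt (by positivity)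
  have hρ : (-σqs / (σq * Real.sqrt (1 + σs ^ 2))) ^ 2 < 1 := by
    rw [div_pow, neg_sq, mul_pow, hS2, div_lt_one (by positivity)]
    nlinarith
  have hD : (0:ℝ) < σq ^ 2 * (1 + σs ^ 2) - σqs ^ 2 := by nlinarith
  have hDs : (0:ℝ) < Real.sqrt (σq ^ 2 * (1 + σs ^ 2) - σqs ^ 2) := Real.sqrt_pos.mpr hD
  rw [num_eq μq μs σq σs σqs γ hq hs hcov, den_eq μq μs σq σs σqs hq hs hcov,
    stdCdf_sub_bvn hρ]
  congr 1
  refine setIntegral_congr_fun measurableSet_Iic fun u _ => ?_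
  congr 1
  have e1 : (1:ℝ) + (σq ^ 2 * σs ^ 2 - σqs ^ 2) / σq ^ 2
      = (σq ^ 2 * (1 + σs ^ 2) - σqs ^ 2) / σq ^ 2 := by
    field_simp; ring
  have e2 : Real.sqrt (1 + (σq ^ 2 * σs ^ 2 - σqs ^ 2) / σq ^ 2)
      = Real.sqrt (σq ^ 2 * (1 + σs ^ 2) - σqs ^ 2) / σq := by
    rw [e1, Real.sqrt_div hD.le, Real.sqrt_sq hq.le]
  have e3 : 1 - (-σqs / (σq * Real.sqrt (1 + σs ^ 2))) ^ 2
      = (σq ^ 2 * (1 + σs ^ 2) - σqs ^ 2) / (σq ^ 2 * (1 + σs ^ 2)) := by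
    rw [div_pow, neg_sq, mul_pow, hS2]
    field_simp
  have e4 : Real.sqrt (1 - (-σqs / (σq * Real.sqrt (1 + σs ^ 2))) ^ 2)
      = Real.sqrt (σq ^ 2 * (1 + σs ^ 2) - σqs ^ 2) / (σq * Real.sqrt (1 + σs ^ 2)) := by
    rw [e3, Real.sqrt_div hD.le, Real.sqrt_mul (sq_nonneg _), Real.sqrt_sq hq.le]
  rw [e2, e4, div_div_eq_mul_div, div_div_eq_mul_div]
  congr 1
  rw [← neg_div, div_eq_div_iff hDs.ne' hDs.ne']
  field_simp
  ring
end

section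
/- Owen's T function satisfies T(h, 1) = (1/2)Φ(h)Φ(−h) for all real h, i.e., T(h,1) = (1/2)Φ(h)(1−Φ(h)). -/
open MeasureTheory Real

noncomputable def owenG (h : ℝ) : ℝ := ∫ t in (0:ℝ)..h, Real.exp (-t ^ 2 / 2)

lemma contf : Continuous (fun t : ℝ => Real.exp (-t ^ 2 / 2)) := by continuity

lemma hG (h : ℝ) : HasDerivAt owenG (Real.exp (-h ^ 2 / 2)) h :=
  intervalIntegral.integral_hasDerivAt_right
    (contf.intervalIntegrable _ _) (contf.stronglyMeasurableAtFilter _ _) contf.continuousAt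

lemma intexp : Integrable (fun x : ℝ => Real.exp (-x ^ 2 / 2)) := by
  have := integrable_exp_neg_mul_sq (b := (1/2 : ℝ)) (by norm_num)
  convert this using 2 with x
  ring_nf

lemma gauss_total : ∫ x : ℝ, Real.exp (-x ^ 2 / 2) = Real.sqrt (2 * Real.pi) := by
  have := integral_gaussian (1/2 : ℝ)
  rw [show π / (1/2 : ℝ) = 2 * π by ring] at this
  rw [← this]
  congr 1 with x
  ring_nf

lemma gauss_half : ∫ x in Set.Iic (0:ℝ), Real.exp (-x ^ 2 / 2) = Real.sqrt (2 * Real.pi) / 2 := by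
  have heq : ∫ x in Set.Iic (0:ℝ), Real.exp (-x ^ 2 / 2)
      = ∫ x in Set.Ioi (0:ℝ), Real.exp (-x ^ 2 / 2) := by
    have h0 := integral_comp_neg_Iic (0:ℝ) (fun x => Real.exp (-x ^ 2 / 2))
    simp only [neg_zero] at h0
    rw [← h0]
    congr 1 with x
    ring_nf
  have hsum := intervalIntegral.integral_Iic_add_Ioi (b := (0:ℝ))
    intexp.integrableOn intexp.integrableOn
  rw [gauss_total] at hsum
  linarith [heq, hsum]

lemma sqrt2pi_pos : 0 < Real.sqrt (2 * Real.pi) :=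
  Real.sqrt_pos.mpr (by positivity)

lemma stdCdf_eq (h : ℝ) : stdCdf h = 1 / 2 + (Real.sqrt (2 * Real.pi))⁻¹ * owenG h := by
  have hsplit := intervalIntegral.integral_Iic_sub_Iic (μ := volume)
    (intexp.integrableOn (s := Set.Iic 0)) (intexp.integrableOn (s := Set.Iic h))
  rw [gauss_half] at hsplit
  unfold stdCdf stdPdf
  rw [MeasureTheory.integral_const_mul]
  have : ∫ s in Set.Iic h, Real.exp (-s ^ 2 / 2)
      = Real.sqrt (2 * Real.pi) / 2 + owenG h := by
    unfold owenG; linarith [hsplit]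
  rw [this, mul_add, mul_div_assoc', inv_mul_cancel₀ sqrt2pi_pos.ne']

lemma owenT_hasDeriv (h : ℝ) :
    HasDerivAt (fun h => owenT h 1)
      (-((2 * Real.pi)⁻¹ * (Real.exp (-h ^ 2 / 2) * owenG h))) h := by
  have key : ∀ h₀ : ℝ, HasDerivAt
      (fun h => ∫ x in (0:ℝ)..1, Real.exp (-h ^ 2 * (1 + x ^ 2) / 2) / (1 + x ^ 2))
      (∫ x in (0:ℝ)..1, -h₀ * Real.exp (-h₀ ^ 2 * (1 + x ^ 2) / 2)) h₀ := by
    intro h₀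
    have := (intervalIntegral.hasDerivAt_integral_of_dominated_loc_of_deriv_le
      (F := fun h x => Real.exp (-h ^ 2 * (1 + x ^ 2) / 2) / (1 + x ^ 2))
      (F' := fun h x => -h * Real.exp (-h ^ 2 * (1 + x ^ 2) / 2))
      (x₀ := h₀) (μ := volume) (a := (0:ℝ)) (b := 1) (bound := fun _ => |h₀| + 1)
      (s := Metric.ball h₀ 1) (Metric.ball_mem_nhds h₀ one_pos) ?_ ?_ ?_ ?_ ?_ ?_).2
    · exact this
    · filter_upwards with x
      exact (Continuous.div (by continuity) (by continuity)
        (fun t => by positivity)).aestronglyMeasurable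
    · apply Continuous.intervalIntegrable
      have h1 : ∀ x : ℝ, (1:ℝ) + x ^ 2 ≠ 0 := fun x => by positivity
      fun_prop (disch := assumption)
    · apply Continuous.aestronglyMeasurable
      fun_prop
    · filter_upwards with t _ x hx
      rw [Real.norm_eq_abs, abs_mul, abs_neg, Real.abs_exp]
      have hb : |x| ≤ |h₀| + 1 := by
        have := abs_sub_abs_le_abs_sub x h₀
        rw [Metric.mem_ball, Real.dist_eq] at hx
        linarith
      have he : Real.exp (-x ^ 2 * (1 + t ^ 2) / 2) ≤ 1 := by
        apply Real.exp_le_one_iff.mpr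
        nlinarith [sq_nonneg x, sq_nonneg t, sq_nonneg (x*t)]
      nlinarith [abs_nonneg x, Real.exp_pos (-x ^ 2 * (1 + t ^ 2) / 2)]
    · apply Continuous.intervalIntegrable; continuity
    · filter_upwards with t _ x _
      have h1 : HasDerivAt (fun h : ℝ => -h ^ 2 * (1 + t ^ 2) / 2)
          (-x * (1 + t ^ 2)) x := by
        have h0 := (hasDerivAt_pow 2 x).const_mul (-(1 + t ^ 2) / 2)
        simp only [Nat.cast_ofNat, pow_one] at h0
        have e : (fun h : ℝ => -h ^ 2 * (1 + t ^ 2) / 2) = fun y => -(1 + t ^ 2) / 2 * y ^ 2 := by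
          funext y; ring
        rw [e]; exact h0.congr_deriv (by ring)
      have h2 := (h1.exp).div_const (1 + t ^ 2)
      refine h2.congr_deriv ?_
      have : (1:ℝ) + t ^ 2 ≠ 0 := by positivity
      field_simp
  have int_eq : (∫ x in (0:ℝ)..1, -h * Real.exp (-h ^ 2 * (1 + x ^ 2) / 2))
      = -(Real.exp (-h ^ 2 / 2) * owenG h) := by
    have hsub : (h : ℝ) • ∫ x in (0:ℝ)..1, Real.exp (-(h * x) ^ 2 / 2)
        = ∫ u in (h*0:ℝ)..(h*1), Real.exp (-u ^ 2 / 2) :=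
      intervalIntegral.smul_integral_comp_mul_left (fun u => Real.exp (-u ^ 2 / 2)) h
    have e1 : (∫ x in (0:ℝ)..1, -h * Real.exp (-h ^ 2 * (1 + x ^ 2) / 2))
        = ∫ x in (0:ℝ)..1, (-Real.exp (-h ^ 2 / 2)) * (h * Real.exp (-(h * x) ^ 2 / 2)) := by
      apply intervalIntegral.integral_congr
      intro x _
      simp only
      rw [show -h ^ 2 * (1 + x ^ 2) / 2 = (-h ^ 2 / 2) + (-(h * x) ^ 2 / 2) by ring,
        Real.exp_add]
      ring
    have e2 : (∫ x in (0:ℝ)..1, h * Real.exp (-(h * x) ^ 2 / 2)) = owenG h := by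
      rw [intervalIntegral.integral_const_mul, ← smul_eq_mul, hsub]
      simp only [mul_zero, mul_one, owenG]
    rw [e1, intervalIntegral.integral_const_mul, e2]
    ring
  have := ((key h).const_mul ((2 * Real.pi)⁻¹))
  rw [int_eq] at this
  exact this.congr_deriv (by ring)


lemma owenT_zero : owenT 0 1 = 1 / 8 := by
  unfold owenT
  have : (∫ x in (0:ℝ)..1, Real.exp (-(0:ℝ) ^ 2 * (1 + x ^ 2) / 2) / (1 + x ^ 2))
      = ∫ x in (0:ℝ)..1, 1 / (1 + x ^ 2) := by
    apply intervalIntegral.integral_congr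
    intro x _
    norm_num
  rw [this, integral_one_div_one_add_sq, Real.arctan_one, Real.arctan_zero]
  have : Real.pi ≠ 0 := Real.pi_ne_zero
  field_simp
  ring

lemma owenT_eq (h : ℝ) : owenT h 1 = 1 / 8 - (2 * Real.pi)⁻¹ * owenG h ^ 2 / 2 := by
  set D : ℝ → ℝ := fun h => owenT h 1 - (1 / 8 - (2 * Real.pi)⁻¹ * owenG h ^ 2 / 2) with hD
  have hderiv : ∀ x : ℝ, HasDerivAt D 0 x := by
    intro x
    have h2 : HasDerivAt (fun h : ℝ => 1 / 8 - (2 * Real.pi)⁻¹ * owenG h ^ 2 / 2)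
        (-((2 * Real.pi)⁻¹ * (Real.exp (-x ^ 2 / 2) * owenG x))) x := by
      have hp := (((hG x).pow 2).const_mul ((2 * Real.pi)⁻¹)).div_const 2
      have := (hasDerivAt_const x (1/8 : ℝ)).sub hp
      exact this.congr_deriv (by push_cast; ring)
    have := (owenT_hasDeriv x).sub h2
    exact this.congr_deriv (by ring)
  have hcst : D h = D 0 := by
    have hdiff : Differentiable ℝ D := fun x => (hderiv x).differentiableAt
    have := is_const_of_deriv_eq_zero hdiff (fun x => (hderiv x).deriv) h 0
    exact this
  have h0 : D 0 = 0 := by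
    simp only [hD, owenT_zero, owenG, intervalIntegral.integral_same]
    ring
  have := hcst.trans h0
  simp only [hD] at this
  linarith

theorem stmt_15 (h : ℝ) : owenT h 1 = (1 / 2) * stdCdf h * (1 - stdCdf h) := by
  rw [owenT_eq, stdCdf_eq]
  have h2 : (2 * Real.pi) = Real.sqrt (2 * Real.pi) ^ 2 := (Real.sq_sqrt (by positivity)).symm
  have hs0 := sqrt2pi_pos.ne'
  generalize hsg : Real.sqrt (2 * Real.pi) = s at h2 hs0
  rw [h2]
  field_simp
  ring
end
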